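/- Let F : (0,∞) → (0,∞) be a positive function and let δ > 0 satisfy δ ≤ min{F(1)^(−3/2), 2^(−3/2)}. If F(4^(−m−1)) ≤ 1 + δ·(F(4^(−m)))^(3/2) for all natural numbers m, then sup over m ∈ ℕ of F(4^(−m)) is at most max{2, δ^(−2/3)}. -/
import Mathlib


/-- Iteration lemma: recurrence `F(4^(-m-1)) ≤ 1 + δ F(4^(-m))^(3/2)` with small `δ`
implies a uniform bound `max 2 (δ^(-2/3))` on `F(4^(-m))` for all `m ∈ ℕ`. -/
theorem stmt_0 (F : ℝ → ℝ) (hF : ∀ r : ℝ, 0 < r → 0 < F r)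
    (δ : ℝ) (hδ : 0 < δ)
    (hδle : δ ≤ min ((F 1) ^ (-(3:ℝ)/2)) ((2:ℝ) ^ (-(3:ℝ)/2)))
    (hrec : ∀ m : ℕ, F ((4:ℝ) ^ (-(m:ℝ) - 1)) ≤ 1 + δ * (F ((4:ℝ) ^ (-(m:ℝ)))) ^ ((3:ℝ)/2)) :
    ∀ m : ℕ, F ((4:ℝ) ^ (-(m:ℝ))) ≤ max 2 (δ ^ (-(2:ℝ)/3)) := by
  set M := max 2 (δ ^ (-(2:ℝ)/3)) with hM
  have hF1 : 0 < F 1 := hF 1 one_pos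
  have hM2 : (2:ℝ) ≤ M := le_max_left _ _
  have hMpos : 0 < M := lt_of_lt_of_le two_pos hM2
  -- key step bound : 1 + δ * M^(3/2) ≤ M
  have hkey : 1 + δ * M ^ ((3:ℝ)/2) ≤ M := by
    rcases le_total (δ ^ (-(2:ℝ)/3)) 2 with h | h
    · have hMeq : M = 2 := max_eq_left h
      have hδ2 : δ ≤ (2:ℝ) ^ (-(3:ℝ)/2) := le_trans hδle (min_le_right _ _)
      have h1 : δ * (2:ℝ) ^ ((3:ℝ)/2) ≤ (2:ℝ) ^ (-(3:ℝ)/2) * (2:ℝ) ^ ((3:ℝ)/2) := by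
        apply mul_le_mul_of_nonneg_right hδ2 (Real.rpow_nonneg (by norm_num) _)
      have h2 : (2:ℝ) ^ (-(3:ℝ)/2) * (2:ℝ) ^ ((3:ℝ)/2) = 1 := by
        rw [← Real.rpow_add two_pos]; norm_num
      rw [hMeq]; nlinarith [h1, h2]
    · have hMeq : M = δ ^ (-(2:ℝ)/3) := max_eq_right h
      have h1 : δ * (δ ^ (-(2:ℝ)/3)) ^ ((3:ℝ)/2) = 1 := by
        have : (δ ^ (-(2:ℝ)/3)) ^ ((3:ℝ)/2) = δ ^ (-(1:ℝ)) := by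
          rw [← Real.rpow_mul hδ.le]; norm_num
        rw [this, Real.rpow_neg_one, mul_inv_cancel₀ hδ.ne']
      rw [hMeq]
      nlinarith [h1, hM2, hMeq]
  intro m
  induction m with
  | zero =>
    have h0 : (4:ℝ) ^ (-(0:ℕ):ℝ) = 1 := by norm_num
    rw [h0]
    have hδF : δ ≤ (F 1) ^ (-(3:ℝ)/2) := le_trans hδle (min_le_left _ _)
    have hb : 0 < (F 1) ^ (-(3:ℝ)/2) := Real.rpow_pos_of_pos hF1 _
    have h2 : ((F 1) ^ (-(3:ℝ)/2)) ^ (-(2:ℝ)/3) ≤ δ ^ (-(2:ℝ)/3) :=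
      Real.rpow_le_rpow_of_nonpos hδ hδF (by norm_num)
    have h3 : ((F 1) ^ (-(3:ℝ)/2)) ^ (-(2:ℝ)/3) = F 1 := by
      rw [← Real.rpow_mul hF1.le]; norm_num
    rw [h3] at h2
    exact le_trans h2 (le_max_right _ _)
  | succ n ih =>
    have hcast : (4:ℝ) ^ (-((n+1:ℕ)):ℝ) = (4:ℝ) ^ (-(n:ℝ) - 1) := by
      push_cast; ring_nf
    rw [hcast]
    have hFn : 0 < F ((4:ℝ) ^ (-(n:ℝ))) :=
      hF _ (Real.rpow_pos_of_pos (by norm_num) _)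
    have hpow : (F ((4:ℝ) ^ (-(n:ℝ)))) ^ ((3:ℝ)/2) ≤ M ^ ((3:ℝ)/2) :=
      Real.rpow_le_rpow hFn.le ih (by norm_num)
    calc F ((4:ℝ) ^ (-(n:ℝ) - 1)) ≤ 1 + δ * (F ((4:ℝ) ^ (-(n:ℝ)))) ^ ((3:ℝ)/2) := hrec n
      _ ≤ 1 + δ * M ^ ((3:ℝ)/2) := by nlinarith
      _ ≤ M := hkey
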